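/- The explicit matrices D₁ (upper triangular with d_{i,i+1} = α and all other entries 0) and E₁ (lower triangular with e_{ij} = β^{i−j+1}(q^{j−1}·C(i−1, j−1) + α·∑_{r=0}^{j−2} C(i−j+r, r) q^r) for j ≤ i, and 0 for j > i), together with ⟨W₁| = (1,0,0,…) and |V₁⟩ = (1,1,1,…)ᵗ, satisfy the Matrix Ansatz relations: D₁E₁ − qE₁D₁ = αβ(D₁+E₁), βD₁|V₁⟩ = αβ|V₁⟩, and α⟨W₁|E₁ = αβ⟨W₁|. -/

import Mathlib

/-- The matrix `D₁` (indexed by positive integers, here 0-based: entry `(i, j)`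
corresponds to `(i+1, j+1)`): `d_{i,i+1} = α` and all other entries `0`. -/
noncomputable def D1 (α : ℝ) : ℕ → ℕ → ℝ := fun i j => if j = i + 1 then α else 0

/-- The matrix `E₁` (0-based indexing as above): lower triangular with
`e_{ij} = β^{i−j+1} (q^{j−1} C(i−1,j−1) + α ∑_{r=0}^{j−2} C(i−j+r,r) q^r)`
for `j ≤ i` (in 1-based indices) and `0` above the diagonal. -/
noncomputable def E1 (α β q : ℝ) : ℕ → ℕ → ℝ := fun i j =>
  if j ≤ i then
    β ^ (i - j + 1) *
      (q ^ j * (Nat.choose i j : ℝ) +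
        α * ∑ r ∈ Finset.range j, (Nat.choose (i - j + r) r : ℝ) * q ^ r)
  else 0

/-- The row vector `⟨W₁| = (1, 0, 0, …)`. -/
noncomputable def W1 : ℕ → ℝ := fun i => if i = 0 then 1 else 0

/-- The column vector `|V₁⟩ = (1, 1, 1, …)ᵗ`. -/
noncomputable def V1 : ℕ → ℝ := fun _ => 1

/-- The explicit matrices `D₁`, `E₁` and vectors `⟨W₁|`, `|V₁⟩` satisfy the
Matrix Ansatz relations with `c = αβ`:
`D₁E₁ − q E₁D₁ = αβ(D₁ + E₁)`, `β D₁|V₁⟩ = αβ|V₁⟩`, `α ⟨W₁|E₁ = αβ ⟨W₁|`.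
(All matrix-vector products are written entrywise via `tsum`; every sum has
only finitely many nonzero terms.) -/
lemma key_sum (q : ℝ) (d m : ℕ) :
    (∑ r ∈ Finset.range (m + 1), (Nat.choose (d + 1 + r) r : ℝ) * q ^ r)
      - q * (∑ r ∈ Finset.range m, (Nat.choose (d + 1 + r) r : ℝ) * q ^ r)
    = ∑ r ∈ Finset.range (m + 1), (Nat.choose (d + r) r : ℝ) * q ^ r := by
  induction m with
  | zero => simp
  | succ m ih =>
    rw [Finset.sum_range_succ (f := fun r => (Nat.choose (d + 1 + r) r : ℝ) * q ^ r) (n := m + 1),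
      Finset.sum_range_succ (f := fun r => (Nat.choose (d + r) r : ℝ) * q ^ r) (n := m + 1)]
    nth_rewrite 2 [Finset.sum_range_succ (f := fun r => (Nat.choose (d + 1 + r) r : ℝ) * q ^ r) (n := m)]
    have hpas : (Nat.choose (d + 1 + (m + 1)) (m + 1) : ℝ)
        = (Nat.choose (d + 1 + m) m : ℝ) + (Nat.choose (d + (m + 1)) (m + 1) : ℝ) := by
      have h1 : d + 1 + (m + 1) = (d + m) + 1 + 1 := by ring
      have h2 : d + 1 + m = (d + m) + 1 := by ring
      have h3 : d + (m + 1) = (d + m) + 1 := by ring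
      rw [h1, h2, h3, Nat.choose_succ_succ' ((d + m) + 1) m]
      push_cast
      ring
    linear_combination ih + q ^ (m + 1) * hpas

theorem matrix_ansatz_solution (α β q : ℝ) :
    (∀ i j : ℕ,
      (∑' k : ℕ, D1 α i k * E1 α β q k j) - q * (∑' k : ℕ, E1 α β q i k * D1 α k j)
        = α * β * (D1 α i j + E1 α β q i j)) ∧
    (∀ i : ℕ, β * (∑' j : ℕ, D1 α i j * V1 j) = α * β * V1 i) ∧
    (∀ j : ℕ, α * (∑' i : ℕ, W1 i * E1 α β q i j) = α * β * W1 j) := by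
  refine ⟨?_, ?_, ?_⟩
  · intro i j
    have h1 : (∑' k : ℕ, D1 α i k * E1 α β q k j) = α * E1 α β q (i + 1) j := by
      rw [tsum_eq_single (i + 1) (fun k hk => by simp [D1, hk])]
      simp [D1]
    rw [h1]
    match j with
    | 0 =>
      have h2 : (∑' k : ℕ, E1 α β q i k * D1 α k 0) = 0 := by
        have : ∀ k : ℕ, E1 α β q i k * D1 α k 0 = 0 := fun k => by simp [D1]
        simp only [this, tsum_zero]
      rw [h2]
      simp only [E1, D1]
      norm_num
      ring
    | m + 1 =>
      have h2 : (∑' k : ℕ, E1 α β q i k * D1 α k (m + 1)) = E1 α β q i m * α := by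
        rw [tsum_eq_single m (fun k hk => by
          have : m + 1 ≠ k + 1 := by omega
          simp [D1, this, Ne.symm hk])]
        simp [D1]
      rw [h2]
      rcases lt_trichotomy m i with hm | hm | hm
      · -- m < i
        obtain ⟨d, rfl⟩ : ∃ d, i = m + 1 + d := ⟨i - m - 1, by omega⟩
        have e1 : m + 1 + d + 1 - (m + 1) = d + 1 := by omega
        have e2 : m + 1 + d - m = d + 1 := by omega
        have e3 : m + 1 + d - (m + 1) = d := by omega
        have c1 : m + 1 ≤ m + 1 + d + 1 := by omega
        have c2 : m ≤ m + 1 + d := by omega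
        have c3 : m + 1 ≤ m + 1 + d := by omega
        have c4 : ¬ (m + 1 = m + 1 + d + 1) := by omega
        simp only [E1, D1, if_pos c1, if_pos c2, if_pos c3, if_neg c4, e1, e2, e3]
        have hpas : (Nat.choose (m + 1 + d + 1) (m + 1) : ℝ)
            = (Nat.choose (m + 1 + d) m : ℝ) + (Nat.choose (m + 1 + d) (m + 1) : ℝ) := by
          have h1 : m + 1 + d + 1 = (m + d) + 1 + 1 := by ring
          have h2' : m + 1 + d = (m + d) + 1 := by ring
          rw [h1, h2', Nat.choose_succ_succ' ((m + d) + 1) m]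
          push_cast; ring
        linear_combination (α * α * β ^ (d + 2)) * key_sum q d m
          + (α * β ^ (d + 2) * q ^ (m + 1)) * hpas
      · -- m = i
        subst hm
        have c1 : m + 1 ≤ m + 1 := le_refl _
        have c4 : ¬ (m + 1 ≤ m) := by omega
        simp only [E1, D1, if_pos c1, if_pos (le_refl m), if_neg c4, if_pos rfl,
          Nat.sub_self, Nat.add_sub_cancel_left, Nat.zero_add, Nat.choose_self,
          Nat.cast_one, Nat.add_sub_cancel, one_mul, if_true, eq_self_iff_true]
        have hgs : (∑ r ∈ Finset.range (m + 1), q ^ r)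
            = q * ∑ r ∈ Finset.range m, q ^ r + 1 := geom_sum_succ
        linear_combination (α * α * β) * hgs
      · -- m > i
        have c1 : ¬ (m + 1 ≤ i + 1) := by omega
        have c2 : ¬ (m ≤ i) := by omega
        have c3 : ¬ (m + 1 ≤ i) := by omega
        have c4 : ¬ (m + 1 = i + 1) := by omega
        simp [E1, D1, c1, c2, c3, c4, hm.ne']
  · intro i
    have h : (∑' j : ℕ, D1 α i j * V1 j) = α := by
      rw [tsum_eq_single (i + 1) (fun k hk => by simp [D1, hk])]
      simp [D1, V1]
    rw [h]; simp [V1]; ring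
  · intro j
    have h : (∑' i : ℕ, W1 i * E1 α β q i j) = E1 α β q 0 j := by
      rw [tsum_eq_single 0 (fun k hk => by simp [W1, hk])]
      simp [W1]
    rw [h]
    match j with
    | 0 => simp [E1, W1]
    | m + 1 => simp [E1, W1]
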